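/- If V is a cyclic kG-module over an infinite field k, then the set of generic points of V is non-empty and Zariski-open; in particular generic points exist. -/

import Mathlib

set_option linter.unusedSectionVars false
set_option maxHeartbeats 1000000

open MulAction Matrix MvPolynomial Finset

/-- A point `v` is generic: it is a generator, its stabilizer equals the kernel of the
action, and every orbit symmetry of `v` is a generic symmetry. -/
def IsGenericPt (k G : Type*) [Field k] [Group G] {d : ℕ}
    [DistribMulAction G (Fin d → k)] [SMulCommClass G k (Fin d → k)]
    (v : Fin d → k) : Prop :=
  Submodule.span k (MulAction.orbit G v) = ⊤ ∧
  MulAction.stabilizer G v = (MulAction.toPermHom G (Fin d → k)).ker ∧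
  ∀ π : Equiv.Perm G,
    (∃ A : (Fin d → k) ≃ₗ[k] (Fin d → k), ∀ g : G, A (g • v) = π g • v) →
    ∀ w : Fin d → k, Submodule.span k (MulAction.orbit G w) = ⊤ →
      ∃ A : (Fin d → k) ≃ₗ[k] (Fin d → k), ∀ g : G, A (g • w) = π g • w

namespace GenericAux

variable {k G : Type*} [Field k] [Group G] {d : ℕ}
  [DistribMulAction G (Fin d → k)] [SMulCommClass G k (Fin d → k)]


/-- orbit is range of smul -/
lemma orbit_eq (v : Fin d → k) : MulAction.orbit G v = Set.range (fun g : G => g • v) := rfl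

/-- the matrix of orbit columns -/
def NM (v : Fin d → k) (f : Fin d → G) : Matrix (Fin d) (Fin d) k :=
  Matrix.of fun i j => (f j • v) i

lemma NM_mulVec (v : Fin d → k) (f : Fin d → G) (a : Fin d → k) :
    (NM v f) *ᵥ a = ∑ j, a j • (f j • v) := by
  funext i
  simp [NM, Matrix.mulVec, dotProduct, Finset.sum_apply, mul_comm]

lemma cramer_vec (N : Matrix (Fin d) (Fin d) k) (x : Fin d → k) :
    N *ᵥ (N.adjugate *ᵥ x) = N.det • x := by
  rw [Matrix.mulVec_mulVec, Matrix.mul_adjugate, Matrix.smul_mulVec, Matrix.one_mulVec]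

/-- Lemma A: span of orbit is top iff some orbit minor is nonzero. -/
lemma span_iff_det [Fintype G] (v : Fin d → k) :
    Submodule.span k (MulAction.orbit G v) = ⊤ ↔ ∃ f : Fin d → G, (NM v f).det ≠ 0 := by
  classical
  constructor
  · intro hsp
    obtain ⟨b, hbsub, hbspan, hbli⟩ := exists_linearIndependent k (MulAction.orbit G v)
    rw [hsp] at hbspan
    have hfin : b.Finite := Set.Finite.subset (by rw [orbit_eq]; exact Set.finite_range _) hbsub
    have : Fintype b := hfin.fintype
    let B0 : Module.Basis b k (Fin d → k) := Module.Basis.mk hbli (by rw [Subtype.range_coe, hbspan])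
    have hcard : Fintype.card b = d := by
      have := Module.finrank_eq_card_basis B0
      simpa [Module.finrank_fin_fun] using this.symm
    let e : Fin d ≃ b := (Fintype.equivFinOfCardEq hcard).symm
    let B : Module.Basis (Fin d) k (Fin d → k) := B0.reindex e.symm
    have hB : ∀ j, (B j : Fin d → k) ∈ MulAction.orbit G v := by
      intro j
      have h1 : B j = ((e j : b) : Fin d → k) := by
        simp [B, Module.Basis.reindex_apply, B0, Module.Basis.mk_apply]
      rw [h1]
      exact hbsub (e j).2
    choose f hf using fun j => MulAction.mem_orbit_iff.mp (hB j)
    refine ⟨f, ?_⟩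
    have hNM : NM v f = Module.Basis.toMatrix (Pi.basisFun k (Fin d)) ⇑B := by
      ext i j
      simp [NM, Module.Basis.toMatrix, Pi.basisFun_repr, hf j]
    have : Invertible (NM v f) := by
      rw [hNM]; exact (Pi.basisFun k (Fin d)).invertibleToMatrix B
    have hu : IsUnit (NM v f).det := (Matrix.isUnit_iff_isUnit_det _).mp (isUnit_of_invertible _)
    exact isUnit_iff_ne_zero.mp hu
  · rintro ⟨f, hf⟩
    have hu : IsUnit (NM v f).det := isUnit_iff_ne_zero.mpr hf
    rw [eq_top_iff]
    intro x _
    have hx : x = (NM v f) *ᵥ ((NM v f)⁻¹ *ᵥ x) := by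
      rw [Matrix.mulVec_mulVec, Matrix.mul_nonsing_inv _ hu, Matrix.one_mulVec]
    rw [hx, NM_mulVec]
    refine Submodule.sum_mem _ fun j _ => Submodule.smul_mem _ _ (Submodule.subset_span ?_)
    exact MulAction.mem_orbit v (f j)








/-- the kernel-inclusion condition -/
def KerIncl [Fintype G] (π : Equiv.Perm G) (v : Fin d → k) : Prop :=
  ∀ c : G → k, ∑ g, c g • (g • v) = 0 → ∑ g, c g • (π g • v) = 0

def HasSym (π : Equiv.Perm G) (v : Fin d → k) : Prop :=
  ∃ A : (Fin d → k) ≃ₗ[k] (Fin d → k), ∀ g : G, A (g • v) = π g • v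

lemma hasSym_kerIncl [Fintype G] {π : Equiv.Perm G} {v : Fin d → k}
    (h : HasSym π v) : KerIncl π v := by
  obtain ⟨A, hA⟩ := h
  intro c hc
  have := congrArg A hc
  rw [map_zero] at this
  rw [← this, map_sum]
  exact Finset.sum_congr rfl fun g _ => by rw [_root_.map_smul, hA]

lemma kerIncl_hasSym [Fintype G] {π : Equiv.Perm G} {v : Fin d → k}
    (hgen : Submodule.span k (MulAction.orbit G v) = ⊤) (h : KerIncl π v) : HasSym π v := by
  classical
  set L : (G → k) →ₗ[k] (Fin d → k) := Fintype.linearCombination k (fun g : G => g • v) with hL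
  set L' : (G → k) →ₗ[k] (Fin d → k) := Fintype.linearCombination k (fun g : G => π g • v)
    with hL'
  have hLsurj : LinearMap.range L = ⊤ := by
    rw [hL, Fintype.range_linearCombination, ← orbit_eq, hgen]
  obtain ⟨s, hs⟩ := L.exists_rightInverse_of_surjective hLsurj
  set B : (Fin d → k) →ₗ[k] (Fin d → k) := L'.comp s with hB
  have hBv : ∀ g : G, B (g • v) = π g • v := by
    intro g
    have h1 : L (Pi.single g 1) = g • v := by
      rw [hL]; simp
    have h2 : L (s (g • v) - Pi.single g 1) = 0 := by
      rw [map_sub, h1]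
      have : L (s (g • v)) = g • v := DFunLike.congr_fun hs (g • v)
      rw [this, sub_self]
    have h2' : ∑ g' : G, ((s (g • v) - Pi.single g (1:k) : G → k) g') • (g' • v) = 0 := h2
    have h3 : L' (s (g • v) - Pi.single g 1) = 0 := h _ h2'
    rw [map_sub, sub_eq_zero] at h3
    have h4 : L' (Pi.single g 1) = π g • v := by rw [hL']; simp
    rw [hB, LinearMap.comp_apply, h3, h4]
  -- surjectivity of B
  have hrange : ∀ g : G, π g • v ∈ LinearMap.range B := fun g => ⟨g • v, hBv g⟩
  have hsp' : Submodule.span k (Set.range fun g : G => π g • v) = ⊤ := by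
    have : (Set.range fun g : G => π g • v) = Set.range fun g : G => g • v := by
      have : (fun g : G => π g • v) = (fun g : G => g • v) ∘ π := rfl
      rw [this, Function.Surjective.range_comp π.surjective]
    rw [this, ← orbit_eq, hgen]
  have hBsurj : Function.Surjective B := by
    rw [← LinearMap.range_eq_top, eq_top_iff, ← hsp']
    rw [Submodule.span_le]
    rintro x ⟨g, rfl⟩
    exact hrange g
  have hBinj : Function.Injective B := LinearMap.injective_iff_surjective.mpr hBsurj
  exact ⟨LinearEquiv.ofBijective B ⟨hBinj, hBsurj⟩, hBv⟩






/-- coordinate polynomial: `eval v (cp g i) = (g • v) i` -/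
noncomputable def cp (g : G) (i : Fin d) : MvPolynomial (Fin d) k :=
  ∑ j, C ((g • (Pi.single j (1:k) : Fin d → k)) i) * X j

lemma smul_eq_sum (g : G) (v : Fin d → k) :
    g • v = ∑ j, v j • (g • (Pi.single j (1:k) : Fin d → k)) := by
  have h0 : v = ∑ j, v j • (Pi.single j (1:k) : Fin d → k) := by
    funext i
    rw [Finset.sum_apply]
    simp [Pi.single_apply]
  calc g • v = g • ∑ j, v j • (Pi.single j (1:k) : Fin d → k) := by rw [← h0]
    _ = ∑ j, g • (v j • (Pi.single j (1:k) : Fin d → k)) := Finset.smul_sum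
    _ = ∑ j, v j • (g • (Pi.single j (1:k) : Fin d → k)) := by
        exact Finset.sum_congr rfl fun j _ => smul_comm g (v j) _

lemma eval_cp (v : Fin d → k) (g : G) (i : Fin d) :
    eval v (cp g i) = (g • v) i := by
  rw [cp, map_sum, smul_eq_sum g v, Finset.sum_apply]
  exact Finset.sum_congr rfl fun j _ => by simp [mul_comm]

/-- polynomial orbit matrix -/
noncomputable def pm (f : Fin d → G) : Matrix (Fin d) (Fin d) (MvPolynomial (Fin d) k) :=
  Matrix.of fun i j => cp (f j) i

lemma pm_map (v : Fin d → k) (f : Fin d → G) :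
    (pm f).map (eval v) = NM v f := by
  ext i j
  simp [pm, NM, eval_cp]

noncomputable def genPoly (f : Fin d → G) : MvPolynomial (Fin d) k := (pm f).det

lemma eval_pm_det (v : Fin d → k) (f : Fin d → G) :
    eval v (pm f).det = (NM v f).det := by
  rw [← pm_map v f, ← RingHom.mapMatrix_apply]
  exact RingHom.map_det _ _

lemma eval_genPoly (v : Fin d → k) (f : Fin d → G) :
    eval v (genPoly f) = (NM v f).det := eval_pm_det v f

noncomputable def stabPoly (g : G) (i : Fin d) : MvPolynomial (Fin d) k := cp g i - X i

lemma eval_stabPoly (v : Fin d → k) (g : G) (i : Fin d) :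
    eval v (stabPoly g i) = (g • v) i - v i := by
  rw [stabPoly, map_sub, eval_cp]
  simp

noncomputable def symPoly (π : Equiv.Perm G) (f : Fin d → G) (g : G) (i : Fin d) :
    MvPolynomial (Fin d) k :=
  (∑ j, ((pm f).adjugate *ᵥ fun j' => cp g j') j * cp (π (f j)) i)
    - (pm f).det * cp (π g) i

lemma eval_symPoly (v : Fin d → k) (π : Equiv.Perm G) (f : Fin d → G) (g : G) (i : Fin d) :
    eval v (symPoly π f g i) =
      ((∑ j, ((NM v f).adjugate *ᵥ (g • v)) j • (π (f j) • v))
        - (NM v f).det • (π g • v)) i := by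
  classical
  have hadj : ∀ a b : Fin d, eval v ((pm f).adjugate a b) = (NM v f).adjugate a b := by
    intro a b
    have := (RingHom.map_adjugate (eval v : MvPolynomial (Fin d) k →+* k) (pm f))
    have h2 := congrFun (congrFun (congrArg (fun M => (M : Matrix (Fin d) (Fin d) k)) this) a) b
    simpa [RingHom.mapMatrix_apply, pm_map v f, Matrix.map_apply] using h2
  have hvec : ∀ j, eval v (((pm f).adjugate *ᵥ fun j' => cp g j') j)
      = ((NM v f).adjugate *ᵥ (g • v)) j := by
    intro j
    simp only [Matrix.mulVec, dotProduct]
    rw [map_sum]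
    exact Finset.sum_congr rfl fun j' _ => by rw [_root_.map_mul, eval_cp, hadj]
  rw [symPoly, map_sub, map_sum, _root_.map_mul, eval_cp, eval_pm_det]
  rw [Pi.sub_apply, Finset.sum_apply, Pi.smul_apply, smul_eq_mul]
  congr 1
  exact Finset.sum_congr rfl fun j _ => by
    rw [_root_.map_mul, hvec, eval_cp, Pi.smul_apply, smul_eq_mul]

lemma sum_single_smul [Fintype G] [DecidableEq G] (c : k) (g : G) (y : G → Fin d → k) :
    ∑ g', ((c • (Pi.single g (1:k) : G → k)) g') • y g' = c • y g := by
  classical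
  have : ∀ g', ((c • (Pi.single g (1:k) : G → k)) g') • y g'
      = if g = g' then c • y g' else 0 := by
    intro g'
    by_cases h : g = g' <;> simp [Pi.single_apply, h]
  simp only [this]
  simp

lemma sum_combination [Fintype G] [DecidableEq G] (a : Fin d → k) (b : k) (f : Fin d → G) (g : G)
    (y : G → Fin d → k) :
    ∑ g', (((∑ j, a j • (Pi.single (f j) (1:k) : G → k)) - b • (Pi.single g (1:k) : G → k)) g') • y g'
      = (∑ j, a j • y (f j)) - b • y g := by
  classical
  have expand : ∀ g', (((∑ j, a j • (Pi.single (f j) (1:k) : G → k)) - b • (Pi.single g (1:k) : G → k)) g') • y g'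
      = (∑ j, ((a j • (Pi.single (f j) (1:k) : G → k)) g') • y g')
        - ((b • (Pi.single g (1:k) : G → k)) g') • y g' := by
    intro g'
    rw [Pi.sub_apply, sub_smul, Finset.sum_apply, Finset.sum_smul]
  rw [Finset.sum_congr rfl fun g' _ => expand g', Finset.sum_sub_distrib]
  congr 1
  · rw [Finset.sum_comm]
    exact Finset.sum_congr rfl fun j _ => sum_single_smul (a j) (f j) y
  · exact sum_single_smul b g y

/-- C1 : kernel inclusion implies the sym polynomials vanish. -/
lemma kerIncl_symPoly [Fintype G] [DecidableEq G] {π : Equiv.Perm G} {v : Fin d → k}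
    (hK : KerIncl π v) (f : Fin d → G) (g : G) (i : Fin d) :
    eval v (symPoly π f g i) = 0 := by
  classical
  set N := NM v f with hN
  set a : Fin d → k := N.adjugate *ᵥ (g • v) with ha
  set c : G → k := (∑ j, a j • (Pi.single (f j) (1:k) : G → k)) - N.det • (Pi.single g (1:k) : G → k) with hc
  have h1 : ∑ g', c g' • (g' • v) = 0 := by
    rw [hc, sum_combination a N.det f g (fun g' => g' • v)]
    have : ∑ j, a j • (f j • v) = N *ᵥ a := (NM_mulVec v f a).symm
    rw [this, ha, cramer_vec, sub_self]
  have h2 : ∑ g', c g' • (π g' • v) = 0 := hK c h1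
  rw [hc, sum_combination a N.det f g (fun g' => π g' • v)] at h2
  rw [eval_symPoly]
  have : (∑ j, ((NM v f).adjugate *ᵥ (g • v)) j • (π (f j) • v))
      - (NM v f).det • (π g • v) = 0 := h2
  rw [this]
  rfl

/-- C2 : if the sym polynomials vanish and `v` generates, kernel inclusion holds. -/
lemma symPoly_kerIncl [Fintype G] {π : Equiv.Perm G} {v : Fin d → k}
    (hgen : Submodule.span k (MulAction.orbit G v) = ⊤)
    (hall : ∀ (f : Fin d → G) (g : G) (i : Fin d), eval v (symPoly π f g i) = 0) :
    KerIncl π v := by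
  classical
  obtain ⟨f, hf⟩ := (span_iff_det v).mp hgen
  set N := NM v f with hN
  set B : (Fin d → k) →ₗ[k] (Fin d → k) :=
    (N.det)⁻¹ • (Fintype.linearCombination k (fun j : Fin d => π (f j) • v)).comp
      (N.adjugate.mulVecLin) with hB
  have hkey : ∀ g : G, B (g • v) = π g • v := by
    intro g
    have h1 : (∑ j, (N.adjugate *ᵥ (g • v)) j • (π (f j) • v)) - N.det • (π g • v) = 0 := by
      funext i
      have := hall f g i
      rw [eval_symPoly] at this
      exact this
    have h2 : ∑ j, (N.adjugate *ᵥ (g • v)) j • (π (f j) • v) = N.det • (π g • v) :=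
      sub_eq_zero.mp h1
    have h3 : B (g • v) = (N.det)⁻¹ • ∑ j, (N.adjugate *ᵥ (g • v)) j • (π (f j) • v) := rfl
    rw [h3, h2, smul_smul, inv_mul_cancel₀ hf, one_smul]
  intro c hc
  have : ∀ g : G, c g • (π g • v) = B (c g • (g • v)) := by
    intro g
    rw [_root_.map_smul, hkey]
  rw [Finset.sum_congr rfl fun g _ => this g, ← map_sum, hc, map_zero]

lemma ker_le_stab (v : Fin d → k) :
    (MulAction.toPermHom G (Fin d → k)).ker ≤ MulAction.stabilizer G v := by
  intro g hg
  rw [MonoidHom.mem_ker] at hg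
  have := Equiv.ext_iff.mp hg v
  simpa using this

lemma mem_ker_iff (g : G) :
    g ∈ (MulAction.toPermHom G (Fin d → k)).ker ↔ ∀ w : Fin d → k, g • w = w := by
  rw [MonoidHom.mem_ker]
  constructor
  · intro h w
    have := Equiv.ext_iff.mp h w
    simpa using this
  · intro h
    refine Equiv.ext fun w => ?_
    simpa using h w

lemma union_zero_locus {ι : Type*} [Fintype ι] (S : ι → Set (MvPolynomial (Fin d) k))
    (v : Fin d → k) :
    (∃ i, ∀ p ∈ S i, eval v p = 0) ↔
      (∀ q ∈ (fun c : ι → MvPolynomial (Fin d) k => ∏ i, c i) '' {c | ∀ i, c i ∈ S i},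
        eval v q = 0) := by
  constructor
  · rintro ⟨i, hi⟩ q ⟨c, hc, rfl⟩
    rw [map_prod]
    exact Finset.prod_eq_zero (Finset.mem_univ i) (hi _ (hc i))
  · intro hq
    by_contra h
    push_neg at h
    choose c hcmem hcne using fun i => h i
    have := hq (∏ i, c i) ⟨c, fun i => hcmem i, rfl⟩
    rw [map_prod] at this
    exact (Finset.prod_ne_zero_iff.mpr fun i _ => hcne i) this

lemma isGenericPt_iff (v : Fin d → k) :
    IsGenericPt k G v ↔
      Submodule.span k (MulAction.orbit G v) = ⊤ ∧
      MulAction.stabilizer G v = (MulAction.toPermHom G (Fin d → k)).ker ∧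
      ∀ π : Equiv.Perm G, HasSym π v →
        ∀ w : Fin d → k, Submodule.span k (MulAction.orbit G w) = ⊤ → HasSym π w :=
  Iff.rfl

end GenericAux

open GenericAux

/-- If `V = k^d` is a cyclic `kG`-module over an infinite field, then the
set of generic points is non-empty and Zariski-open. -/
theorem generic_points_nonempty_open
    {k G : Type*} [Field k] [Infinite k] [Group G] [Finite G] (d : ℕ)
    [DistribMulAction G (Fin d → k)] [SMulCommClass G k (Fin d → k)]
    (hcyc : ∃ v : Fin d → k, Submodule.span k (MulAction.orbit G v) = ⊤) :
    (∃ v : Fin d → k, IsGenericPt k G v) ∧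
    ∃ S : Set (MvPolynomial (Fin d) k),
      {v : Fin d → k | ¬ IsGenericPt k G v} =
        {v : Fin d → k | ∀ p ∈ S, MvPolynomial.eval v p = 0} := by
  classical
  have _inst : Fintype G := Fintype.ofFinite G
  set S : (Unit ⊕ G ⊕ Equiv.Perm G) → Set (MvPolynomial (Fin d) k) :=
    Sum.elim (fun _ : Unit => Set.range (genPoly (k := k) (G := G) (d := d)))
      (Sum.elim
        (fun g : G => if ∀ w : Fin d → k, g • w = w then {1} else Set.range (stabPoly g))
        (fun π : Equiv.Perm G =>
          if ∀ w : Fin d → k, Submodule.span k (MulAction.orbit G w) = ⊤ → HasSym π w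
          then {1}
          else Set.range fun t : (Fin d → G) × G × Fin d => symPoly π t.1 t.2.1 t.2.2))
    with hS
  have hchar : ∀ v : Fin d → k,
      ¬ IsGenericPt k G v ↔ ∃ i, ∀ p ∈ S i, MvPolynomial.eval v p = 0 := by
    intro v
    rw [isGenericPt_iff]
    constructor
    · intro hng
      by_cases hgen : Submodule.span k (MulAction.orbit G v) = ⊤
      · by_cases hstab :
            MulAction.stabilizer G v = (MulAction.toPermHom G (Fin d → k)).ker
        · have h3 : ¬ ∀ π : Equiv.Perm G, HasSym π v →
              ∀ w : Fin d → k, Submodule.span k (MulAction.orbit G w) = ⊤ → HasSym π w :=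
            fun h => hng ⟨hgen, hstab, h⟩
          push_neg at h3
          obtain ⟨π, hπ, hw⟩ := h3
          refine ⟨Sum.inr (Sum.inr π), ?_⟩
          have hcond : ¬ ∀ w : Fin d → k,
              Submodule.span k (MulAction.orbit G w) = ⊤ → HasSym π w := by
            push_neg
            exact hw
          simp only [hS, Sum.elim_inr, if_neg hcond]
          rintro p ⟨⟨f, g, i⟩, rfl⟩
          exact kerIncl_symPoly (hasSym_kerIncl hπ) f g i
        · have hnle : ¬ MulAction.stabilizer G v ≤ (MulAction.toPermHom G (Fin d → k)).ker :=
            fun h => hstab (le_antisymm h (ker_le_stab v))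
          obtain ⟨g, hgv, hgk⟩ := SetLike.not_le_iff_exists.mp hnle
          refine ⟨Sum.inr (Sum.inl g), ?_⟩
          have hcond : ¬ ∀ w : Fin d → k, g • w = w := fun h => hgk ((mem_ker_iff g).mpr h)
          simp only [hS, Sum.elim_inr, Sum.elim_inl, if_neg hcond]
          rintro p ⟨i, rfl⟩
          rw [eval_stabPoly, MulAction.mem_stabilizer_iff.mp hgv, sub_self]
      · refine ⟨Sum.inl (), ?_⟩
        simp only [hS, Sum.elim_inl]
        rintro p ⟨f, rfl⟩
        rw [eval_genPoly]
        by_contra h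
        exact hgen ((span_iff_det v).mpr ⟨f, h⟩)
    · rintro ⟨i, hi⟩ hgp
      obtain ⟨hgen, hstab, h3⟩ := hgp
      rcases i with u | g | π
      · obtain ⟨f, hf⟩ := (span_iff_det v).mp hgen
        refine hf ?_
        rw [← eval_genPoly v f]
        exact hi _ ⟨f, rfl⟩
      · by_cases hcond : ∀ w : Fin d → k, g • w = w
        · have h1 := hi 1 (by simp [hS, if_pos hcond])
          simpa using h1
        · have hiv : ∀ i : Fin d, MvPolynomial.eval v (stabPoly g i) = 0 := by
            intro i
            refine hi _ ?_
            simp only [hS, Sum.elim_inr, Sum.elim_inl, if_neg hcond]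
            exact ⟨i, rfl⟩
          have hgv : g • v = v := by
            funext i
            have h2 := hiv i
            rw [eval_stabPoly] at h2
            exact sub_eq_zero.mp h2
          have hker : g ∈ (MulAction.toPermHom G (Fin d → k)).ker := by
            rw [← hstab]
            exact MulAction.mem_stabilizer_iff.mpr hgv
          exact hcond ((mem_ker_iff g).mp hker)
      · by_cases hcond : ∀ w : Fin d → k,
            Submodule.span k (MulAction.orbit G w) = ⊤ → HasSym π w
        · have h1 := hi 1 (by simp [hS, if_pos hcond])
          simpa using h1
        · have hcond' := hcond
          push_neg at hcond'
          obtain ⟨w, hw, hnw⟩ := hcond'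
          have hiv : ∀ (f : Fin d → G) (g : G) (i : Fin d),
              MvPolynomial.eval v (symPoly π f g i) = 0 := by
            intro f g i
            refine hi _ ?_
            simp only [hS, Sum.elim_inr, if_neg hcond]
            exact ⟨⟨f, g, i⟩, rfl⟩
          exact hnw (h3 π (kerIncl_hasSym hgen (symPoly_kerIncl hgen hiv)) w hw)
  have hnonzero : ∀ i, ∃ p ∈ S i, p ≠ 0 := by
    intro i
    rcases i with u | g | π
    · obtain ⟨v0, hv0⟩ := hcyc
      obtain ⟨f, hf⟩ := (span_iff_det v0).mp hv0
      refine ⟨genPoly f, ⟨f, rfl⟩, fun h => hf ?_⟩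
      rw [← eval_genPoly v0 f, h, map_zero]
    · by_cases hcond : ∀ w : Fin d → k, g • w = w
      · exact ⟨1, by simp [hS, if_pos hcond], one_ne_zero⟩
      · have hcond' := hcond
        push_neg at hcond'
        obtain ⟨w, hw⟩ := hcond'
        obtain ⟨i, hi⟩ := Function.ne_iff.mp hw
        refine ⟨stabPoly g i, ?_, fun h => ?_⟩
        · simp only [hS, Sum.elim_inr, Sum.elim_inl, if_neg hcond]
          exact ⟨i, rfl⟩
        · have := eval_stabPoly w g i
          rw [h, map_zero] at this
          exact hi (sub_eq_zero.mp this.symm)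
    · by_cases hcond : ∀ w : Fin d → k,
          Submodule.span k (MulAction.orbit G w) = ⊤ → HasSym π w
      · exact ⟨1, by simp [hS, if_pos hcond], one_ne_zero⟩
      · have hcond' := hcond
        push_neg at hcond'
        obtain ⟨w, hw, hnw⟩ := hcond'
        have hnk : ¬ KerIncl π w := fun h => hnw (kerIncl_hasSym hw h)
        have hne : ¬ ∀ (f : Fin d → G) (g : G) (i : Fin d),
            MvPolynomial.eval w (symPoly π f g i) = 0 :=
          fun h => hnk (symPoly_kerIncl hw h)
        push_neg at hne
        obtain ⟨f, g, i, hfgi⟩ := hne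
        refine ⟨symPoly π f g i, ?_, fun h => hfgi (by rw [h, map_zero])⟩
        simp only [hS, Sum.elim_inr, if_neg hcond]
        exact ⟨⟨f, g, i⟩, rfl⟩
  constructor
  · choose c hcmem hcne using hnonzero
    have hqne : (∏ i, c i) ≠ 0 := Finset.prod_ne_zero_iff.mpr fun i _ => hcne i
    have hex : ∃ v : Fin d → k, MvPolynomial.eval v (∏ i, c i) ≠ 0 := by
      by_contra h
      push_neg at h
      exact hqne (MvPolynomial.funext fun x => by rw [h x, map_zero])
    obtain ⟨v, hv⟩ := hex
    refine ⟨v, ?_⟩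
    by_contra hng
    obtain ⟨i, hi⟩ := (hchar v).mp hng
    apply hv
    rw [map_prod]
    exact Finset.prod_eq_zero (Finset.mem_univ i) (hi _ (hcmem i))
  · refine ⟨(fun c : (Unit ⊕ G ⊕ Equiv.Perm G) → MvPolynomial (Fin d) k => ∏ i, c i) ''
      {c | ∀ i, c i ∈ S i}, ?_⟩
    ext v
    simp only [Set.mem_setOf_eq]
    rw [hchar v, union_zero_locus S v]
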